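/- arXiv:2304.10166 — 3 statements merged into one kernel-verified Lean document; each statement's English description precedes it below -/
import Mathlib

section
/- The Thue–Morse sequence is cube-free: there is no nonempty word u and index i such that the factor of the Thue–Morse sequence starting at i equals u·u·u. -/
/-- The Thue–Morse sequence as a Boolean sequence. -/
def thueMorse (n : ℕ) : Bool := (Nat.digits 2 n).count 1 % 2 = 1

lemma tm_two_mul (n : ℕ) : thueMorse (2*n) = thueMorse n := by
  rcases Nat.eq_zero_or_pos n with h|h
  · simp [h]
  · unfold thueMorse
    rw [Nat.digits_def' (by norm_num : 1 < 2) (by omega)]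
    simp [Nat.mul_div_cancel_left, Nat.mul_mod_right]

lemma tm_two_mul_add_one (n : ℕ) : thueMorse (2*n+1) = !thueMorse n := by
  unfold thueMorse
  rw [Nat.digits_def' (by norm_num : 1 < 2) (by omega)]
  have h1 : (2*n+1) % 2 = 1 := by omega
  have h2 : (2*n+1) / 2 = n := by omega
  rw [h1, h2, List.count_cons]
  by_cases h : (Nat.digits 2 n).count 1 % 2 = 1 <;> simp [h] <;> omega

lemma tm_odd_of_eq_succ {n : ℕ} (h : thueMorse n = thueMorse (n+1)) : n % 2 = 1 := by
  by_contra hn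
  have he : n = 2 * (n/2) := by omega
  rw [he] at h
  rw [tm_two_mul, tm_two_mul_add_one] at h
  simp at h

lemma tm_cube_aux (k : ℕ) : ∀ i : ℕ, 0 < k →
    (∀ j < k, thueMorse (i + j) = thueMorse (i + k + j) ∧
      thueMorse (i + k + j) = thueMorse (i + 2 * k + j)) → False := by
  induction k using Nat.strong_induction_on with
  | _ k ih =>
  intro i hk hc
  have H : ∀ x, i ≤ x → x < i + 2*k → thueMorse x = thueMorse (x+k) := by
    intro x h1 h2
    rcases lt_or_ge x (i+k) with h|h
    · have := (hc (x-i) (by omega)).1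
      have e1 : i + (x-i) = x := by omega
      have e2 : i + k + (x-i) = x + k := by omega
      rwa [e1, e2] at this
    · have := (hc (x-i-k) (by omega)).2
      have e1 : i + k + (x-i-k) = x := by omega
      have e2 : i + 2*k + (x-i-k) = x + k := by omega
      rwa [e1, e2] at this
  rcases Nat.even_or_odd k with ⟨b, hb⟩ | hko
  · -- k even, k = b + b
    have hb0 : 0 < b := by omega
    rcases Nat.even_or_odd i with ⟨a, ha⟩ | ⟨a, ha⟩
    · -- i = a + a
      refine ih b (by omega) a hb0 ?_
      intro j hj
      have h2j := hc (2*j) (by omega)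
      have e1 : i + 2*j = 2*(a+j) := by omega
      have e2 : i + k + 2*j = 2*(a+b+j) := by omega
      have e3 : i + 2*k + 2*j = 2*(a+2*b+j) := by omega
      rw [e1, e2, e3, tm_two_mul, tm_two_mul, tm_two_mul] at h2j
      exact h2j
    · -- i = 2a+1
      refine ih b (by omega) (a+1) hb0 ?_
      intro j hj
      have h2j := hc (2*j+1) (by omega)
      have e1 : i + (2*j+1) = 2*(a+1+j) := by omega
      have e2 : i + k + (2*j+1) = 2*(a+1+b+j) := by omega
      have e3 : i + 2*k + (2*j+1) = 2*(a+1+2*b+j) := by omega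
      rw [e1, e2, e3, tm_two_mul, tm_two_mul, tm_two_mul] at h2j
      exact h2j
  · -- k odd
    rcases eq_or_lt_of_le (show 1 ≤ k from hk) with h1|h3
    · -- k = 1
      have hk1 : k = 1 := h1.symm
      subst hk1
      have a1 := tm_odd_of_eq_succ (H i (le_refl i) (by omega))
      have a2 := tm_odd_of_eq_succ (H (i+1) (by omega) (by omega))
      omega
    · -- k odd, k ≥ 3
      have hk3 : 3 ≤ k := by
        rcases hko with ⟨c, hc'⟩; omega
      set n := i + i % 2 with hn
      have hne : n % 2 = 0 := by omega
      -- helper: for even x with x+1 in range, derive (x+k)/2 is odd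
      have step : ∀ x, x % 2 = 0 → i ≤ x → x + 1 < i + 2*k → ((x+k-1)/2) % 2 = 1 := by
        intro x hx hx1 hx2
        have hxk : x + k = 2 * ((x+k-1)/2) + 1 := by
          rcases hko with ⟨c, hc'⟩; omega
        set m := (x+k-1)/2 with hm
        have hne' : thueMorse x ≠ thueMorse (x+1) := by
          intro h
          have := tm_odd_of_eq_succ h
          omega
        have e1 := H x hx1 (by omega)
        have e2 := H (x+1) (by omega) hx2
        have e3 : x + 1 + k = x + k + 1 := by omega
        rw [e3] at e2
        have hne2 : thueMorse (x+k) ≠ thueMorse (x+k+1) := by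
          rw [← e1, ← e2]; exact hne'
        have ee2 : x + k + 1 = 2*(m+1) := by omega
        rw [hxk] at hne2
        rw [show 2*m+1+1 = 2*(m+1) by omega] at hne2
        rw [tm_two_mul_add_one, tm_two_mul] at hne2
        have heq : thueMorse m = thueMorse (m+1) := by
          cases h1 : thueMorse m <;> cases h2 : thueMorse (m+1) <;>
            simp [h1, h2] at hne2 ⊢
        exact tm_odd_of_eq_succ heq
      have s1 := step n hne (by omega) (by omega)
      have s2 := step (n+2) (by omega) (by omega) (by omega)
      have e : (n+2+k-1)/2 = (n+k-1)/2 + 1 := by omega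
      omega

/-- The Thue–Morse sequence is cube-free. -/
theorem thueMorse_cubefree :
    ¬ ∃ i k : ℕ, 0 < k ∧ ∀ j < k,
      thueMorse (i + j) = thueMorse (i + k + j) ∧
      thueMorse (i + k + j) = thueMorse (i + 2 * k + j) := by
  rintro ⟨i, k, hk, hc⟩
  exact tm_cube_aux k i hk hc
end

section
/- Every language built from singleton languages of finite words using concatenation and Kleene plus contains at most one square-free word. -/
/-- A finite word is square-free if it has no nonempty factor of the form `u ++ u`. -/
def SqFreeWord {α : Type} (w : List α) : Prop :=
  ¬ ∃ (x u y : List α), u ≠ [] ∧ w = x ++ u ++ u ++ y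

/-- The Kleene plus of a language: joins of nonempty lists of words from `L`. -/
def KleenePlus {α : Type} (L : Set (List α)) : Set (List α) :=
  {w | ∃ vs : List (List α), vs ≠ [] ∧ (∀ v ∈ vs, v ∈ L) ∧ w = vs.flatten}

/-- Languages built from singletons by concatenation and Kleene plus. -/
inductive GenLang {α : Type} : Set (List α) → Prop
  | singleton (w : List α) : GenLang {w}
  | concat {L₁ L₂ : Set (List α)} : GenLang L₁ → GenLang L₂ →
      GenLang {w | ∃ a ∈ L₁, ∃ b ∈ L₂, w = a ++ b}
  | plus {L : Set (List α)} : GenLang L → GenLang (KleenePlus L)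

lemma sqfree_factor {α : Type} {x v y : List α} (h : SqFreeWord (x ++ v ++ y)) :
    SqFreeWord v := by
  rintro ⟨a, u, b, hu, rfl⟩
  exact h ⟨x ++ a, u, b ++ y, hu, by simp [List.append_assoc]⟩

lemma join_mem {α : Type} {L : Set (List α)}
    (hsub : {w ∈ L | SqFreeWord w}.Subsingleton) :
    ∀ vs : List (List α), vs ≠ [] → (∀ v ∈ vs, v ∈ L) →
      SqFreeWord vs.flatten → vs.flatten ∈ L := by
  intro vs
  induction vs with
  | nil => intro h; exact absurd rfl h
  | cons v rest ih =>
    intro _ hmem hsf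
    have hj : (v :: rest).flatten = v ++ rest.flatten := rfl
    rw [hj] at hsf ⊢
    by_cases hr : rest.flatten = []
    · rw [hr, List.append_nil]
      exact hmem v (by simp)
    · have hrest : rest ≠ [] := by rintro rfl; simp at hr
      have hsfr : SqFreeWord rest.flatten :=
        sqfree_factor (x := v) (y := []) (by simpa using hsf)
      have hrL : rest.flatten ∈ L := ih hrest (fun u hu => hmem u (by simp [hu])) hsfr
      by_cases hv : v = []
      · rw [hv, List.nil_append]; exact hrL
      · have hsfv : SqFreeWord v :=
          sqfree_factor (x := []) (y := rest.flatten) (by simpa using hsf)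
        have hvL : v ∈ L := hmem v (by simp)
        have : v = rest.flatten := hsub ⟨hvL, hsfv⟩ ⟨hrL, hsfr⟩
        exact absurd hsf (by rw [← this]; exact fun h => h ⟨[], v, [], hv, by simp⟩)

theorem genLang_at_most_one_squarefree {α : Type} (L : Set (List α))
    (hL : GenLang L) : {w ∈ L | SqFreeWord w}.Subsingleton := by
  induction hL with
  | singleton w =>
    intro a ha b hb
    obtain ⟨ha1, _⟩ := ha; obtain ⟨hb1, _⟩ := hb
    simp only [Set.mem_singleton_iff] at ha1 hb1
    rw [ha1, hb1]
  | concat h1 h2 ih1 ih2 =>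
    intro w1 hw1 w2 hw2
    obtain ⟨⟨a1, ha1, b1, hb1, rfl⟩, hs1⟩ := hw1
    obtain ⟨⟨a2, ha2, b2, hb2, rfl⟩, hs2⟩ := hw2
    have hsa1 : SqFreeWord a1 := sqfree_factor (x := []) (y := b1) (by simpa using hs1)
    have hsa2 : SqFreeWord a2 := sqfree_factor (x := []) (y := b2) (by simpa using hs2)
    have hsb1 : SqFreeWord b1 := sqfree_factor (x := a1) (y := []) (by simpa using hs1)
    have hsb2 : SqFreeWord b2 := sqfree_factor (x := a2) (y := []) (by simpa using hs2)
    have ea : a1 = a2 := ih1 ⟨ha1, hsa1⟩ ⟨ha2, hsa2⟩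
    have eb : b1 = b2 := ih2 ⟨hb1, hsb1⟩ ⟨hb2, hsb2⟩
    rw [ea, eb]
  | plus h ih =>
    intro w1 hw1 w2 hw2
    obtain ⟨⟨vs1, hne1, hm1, rfl⟩, hs1⟩ := hw1
    obtain ⟨⟨vs2, hne2, hm2, rfl⟩, hs2⟩ := hw2
    exact ih ⟨join_mem ih vs1 hne1 hm1 hs1, hs1⟩ ⟨join_mem ih vs2 hne2 hm2 hs2, hs2⟩
end

section
/- If a point p starts an infinite chain of a relation R, and R equals the union over words w in a set W of finite words over an index set I of the composed relations R_w (composition of R_i along w), then p starts an infinite chain of the relation ⋃_{i ∈ I} R_i whose step sequence lies in the ω-language W^ω (after removing empty words). -/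
/-- Composition of a family of relations along a finite word of indices. -/
def compWord {I C : Type} (Rfam : I → C → C → Prop) : List I → C → C → Prop
  | [], a, b => a = b
  | i :: w, a, b => ∃ u, Rfam i a u ∧ compWord Rfam w u b

namespace InfChainAux

variable {I C : Type} (Rfam : I → C → C → Prop) (f : ℕ → C) (w : ℕ → List I)

/-- cumulative sums of word lengths -/
def S (m : ℕ) : ℕ := (Finset.range m).sum (fun k => (w k).length)

lemma S_succ (m : ℕ) : S w (m + 1) = S w m + (w m).length := by
  simp [S, Finset.sum_range_succ]

/-- Invariant at time `n` for a state `(c, m, rest)`. -/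
def Inv (n : ℕ) (s : C × ℕ × List I) : Prop :=
  s.2.2 ≠ [] ∧ compWord Rfam s.2.2 s.1 (f (s.2.1 + 1)) ∧
  ∃ pre, pre ++ s.2.2 = w s.2.1 ∧ n = S w s.2.1 + pre.length

variable (hne : ∀ m, w m ≠ []) (hcomp : ∀ m, compWord Rfam (w m) (f m) (f (m + 1)))

noncomputable def step (n : ℕ) (s : {s : C × ℕ × List I // Inv Rfam f w n s}) :
    {s' : C × ℕ × List I // Inv Rfam f w (n + 1) s' ∧
      ∃ i t, s.1.2.2 = i :: t ∧ Rfam i s.1.1 s'.1 ∧ (t ≠ [] → s'.2.2 = t)} :=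
  Classical.choice (by
  obtain ⟨⟨c, m, rest⟩, hrest, hcw, pre, hpre, hn⟩ := s
  cases rest with
  | nil => exact absurd rfl hrest
  | cons i t =>
    obtain ⟨u, hu, hcw'⟩ := hcw
    by_cases ht : t = []
    · subst ht
      simp only [compWord] at hcw'
      subst hcw'
      refine ⟨⟨(f (m + 1), m + 1, w (m + 1)),
        ⟨hne _, hcomp _, [], by simp, ?_⟩, i, [], rfl, hu, by simp⟩⟩
      have hlen : (w m).length = pre.length + 1 := by
        rw [← hpre]; simp
      simp [S_succ, hlen, hn]; omega
    · refine ⟨⟨(u, m, t), ⟨ht, hcw', pre ++ [i], ?_, ?_⟩, i, t, rfl, hu, fun _ => rfl⟩⟩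
      · simpa [List.append_assoc] using hpre
      · simp [hn]; omega)

noncomputable def g : (n : ℕ) → {s : C × ℕ × List I // Inv Rfam f w n s} :=
  Nat.rec ⟨(f 0, 0, w 0), hne 0, hcomp 0, [], rfl, by simp [S]⟩
    (fun n ih => ⟨(step Rfam f w hne hcomp n ih).1, (step Rfam f w hne hcomp n ih).2.1⟩)

lemma g_step (n : ℕ) :
    ∃ i t, (g Rfam f w hne hcomp n).1.2.2 = i :: t ∧
      Rfam i (g Rfam f w hne hcomp n).1.1 (g Rfam f w hne hcomp (n + 1)).1.1 ∧
      (t ≠ [] → (g Rfam f w hne hcomp (n + 1)).1.2.2 = t) :=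
  (step Rfam f w hne hcomp n (g Rfam f w hne hcomp n)).2.2

noncomputable def idx (n : ℕ) : I :=
  ((g Rfam f w hne hcomp n).1.2.2).head (g Rfam f w hne hcomp n).2.1

lemma idx_eq {n : ℕ} {i : I} {t : List I}
    (h : (g Rfam f w hne hcomp n).1.2.2 = i :: t) :
    idx Rfam f w hne hcomp n = i := by
  simp only [idx]
  have := (g Rfam f w hne hcomp n).2.1
  rw [List.head_eq_iff_head?_eq_some this, h]
  rfl

lemma ofFn_eq : ∀ (k n : ℕ), ((g Rfam f w hne hcomp n).1.2.2).length = k →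
    List.ofFn (fun j : Fin k => idx Rfam f w hne hcomp (n + j)) =
      (g Rfam f w hne hcomp n).1.2.2 := by
  intro k
  induction k with
  | zero =>
    intro n hlen
    exact absurd (List.eq_nil_of_length_eq_zero hlen) (g Rfam f w hne hcomp n).2.1
  | succ k ih =>
    intro n hlen
    obtain ⟨i, t, hit, hR, hnext⟩ := g_step Rfam f w hne hcomp n
    have hidx : idx Rfam f w hne hcomp n = i := idx_eq Rfam f w hne hcomp hit
    rw [List.ofFn_succ, hit]
    have htlen : t.length = k := by rw [hit] at hlen; simpa using hlen
    by_cases ht : t = []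
    · subst ht
      simp at htlen
      subst htlen
      simp [hidx]
    · have hrest : (g Rfam f w hne hcomp (n + 1)).1.2.2 = t := hnext ht
      have := ih (n + 1) (by rw [hrest]; exact htlen)
      rw [hrest] at this
      have hfun : (fun j : Fin k => idx Rfam f w hne hcomp (n + ↑(Fin.succ j))) =
          fun j : Fin k => idx Rfam f w hne hcomp (n + 1 + ↑j) := by
        funext j
        congr 1
        simp [Fin.val_succ]
        omega
      simp only [hfun, this]
      simp [hidx]

end InfChainAux

/-- If `R = ⋃_{w ∈ W} R_w` for a language `W` of nonempty words and `p` starts an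
infinite `R`-chain, then `p` starts an infinite chain of steps of the individual
relations whose index word is an infinite concatenation of words from `W`. -/
theorem infinite_chain_omega_word {I C : Type} (Rfam : I → C → C → Prop)
    (W : Set (List I)) (hW : ∀ w ∈ W, w ≠ [])
    (R : C → C → Prop) (hR : ∀ a b, R a b ↔ ∃ w ∈ W, compWord Rfam w a b)
    (p : C) (hinf : ∃ f : ℕ → C, f 0 = p ∧ ∀ n, R (f n) (f (n + 1))) :
    ∃ (f : ℕ → C) (idx : ℕ → I) (len : ℕ → ℕ),
      f 0 = p ∧
      (∀ n, Rfam (idx n) (f n) (f (n + 1))) ∧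
      (∀ m, 0 < len m) ∧
      (∀ m, (List.ofFn fun j : Fin (len m) =>
        idx ((Finset.range m).sum len + j)) ∈ W) := by
  obtain ⟨f, hf0, hfR⟩ := hinf
  have hchoice : ∀ m : ℕ, ∃ v : List I, v ∈ W ∧ compWord Rfam v (f m) (f (m + 1)) := by
    intro m
    obtain ⟨v, hv, hcv⟩ := (hR _ _).mp (hfR m)
    exact ⟨v, hv, hcv⟩
  choose w hwW hwcomp using hchoice
  have hne : ∀ m, w m ≠ [] := fun m => hW _ (hwW m)
  set G := InfChainAux.g Rfam f w hne hwcomp with hG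
  refine ⟨fun n => (G n).1.1, InfChainAux.idx Rfam f w hne hwcomp,
    fun m => (w m).length, hf0 ▸ rfl, ?_, ?_, ?_⟩
  · intro n
    obtain ⟨i, t, hit, hRf, _⟩ := InfChainAux.g_step Rfam f w hne hwcomp n
    rwa [InfChainAux.idx_eq Rfam f w hne hwcomp hit]
  · intro m
    simpa using List.length_pos_iff.mpr (hne m)
  · intro m
    -- identify the state at time S m
    have hSmono : ∀ a b : ℕ, a ≤ b → InfChainAux.S w a ≤ InfChainAux.S w b := by
      intro a b hab
      exact Finset.sum_le_sum_of_subset (Finset.range_subset_range.mpr hab)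
    obtain ⟨hrest, hcw, pre, hpre, hn⟩ := (G (InfChainAux.S w m)).2
    set m' := (G (InfChainAux.S w m)).1.2.1 with hm'
    have hlenpos : 0 < ((G (InfChainAux.S w m)).1.2.2).length := List.length_pos_iff.mpr hrest
    have hwm' : (w m').length = pre.length + ((G (InfChainAux.S w m)).1.2.2).length := by
      rw [← hpre]; simp
    have hlt : InfChainAux.S w m < InfChainAux.S w (m' + 1) := by
      rw [InfChainAux.S_succ, hwm']; omega
    have hle : InfChainAux.S w m' ≤ InfChainAux.S w m := by omega
    have hmm' : m' = m := by
      by_contra hcon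
      rcases Nat.lt_or_ge m' m with h | h
      · have : InfChainAux.S w (m' + 1) ≤ InfChainAux.S w m := hSmono _ _ h
        omega
      · have h' : m < m' := lt_of_le_of_ne h (Ne.symm hcon)
        have : InfChainAux.S w (m + 1) ≤ InfChainAux.S w m' := hSmono _ _ h'
        have h2 : InfChainAux.S w m < InfChainAux.S w (m + 1) := by
          rw [InfChainAux.S_succ]
          have := List.length_pos_iff.mpr (hne m)
          omega
        omega
    rw [hmm'] at hn hpre
    have hpre0 : pre = [] := by
      have : pre.length = 0 := by omega
      exact List.eq_nil_of_length_eq_zero this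
    subst hpre0
    simp only [List.nil_append] at hpre
    have hlen : ((G (InfChainAux.S w m)).1.2.2).length = (w m).length := by
      rw [hpre]
    have key := InfChainAux.ofFn_eq Rfam f w hne hwcomp ((w m).length)
      (InfChainAux.S w m) hlen
    rw [hpre] at key
    have hsum : (Finset.range m).sum (fun k => (w k).length) = InfChainAux.S w m := rfl
    rw [hsum, key]
    exact hwW m
end
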